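/- arXiv:1507.04885 — 2 statements merged into one kernel-verified Lean document; each statement's English description precedes it below -/
import Mathlib

section
/- If H=(B,S,E) is a simple path (the underlying graph is a path), with weights -1 on B and +1 on S and every vertex of B having at least one neighbor, then bg(H) ≤ 2. -/
open Finset

variable {V : Type*}

/-- The value (#bought − #sold) of a prefix `p` of an ordering (±1 weights). -/
def prefixVal (bought : V → Prop) [DecidablePred bought] (p : List V) : ℤ :=
  (p.countP (fun v => decide (bought v)) : ℤ) -
    (p.countP (fun v => decide (¬ bought v)) : ℤ)

/-- The budget of an ordering: the maximum prefix value (at least 0, via the empty prefix). -/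
def budgetOf (bought : V → Prop) [DecidablePred bought] (l : List V) : ℤ :=
  (l.inits.map (prefixVal bought)).foldr max 0

/-- A valid ordering of the vertex set `A`: a listing of exactly the vertices of `A`,
without repetition, such that every prefix containing a sold vertex `s` also contains
every bought neighbour of `s` that belongs to `A`. -/
def ValidOrderOn (adj : V → V → Prop) (bought : V → Prop) (A : Finset V)
    (l : List V) : Prop :=
  l.Nodup ∧ (∀ v, v ∈ l ↔ v ∈ A) ∧
    ∀ p, p <+: l → ∀ s ∈ p, ¬ bought s → ∀ b ∈ A, bought b → adj b s → b ∈ p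

/-- The optimal budget of the subgraph induced on the vertex set `A`. -/
noncomputable def bgOn (adj : V → V → Prop) (bought : V → Prop) [DecidablePred bought]
    (A : Finset V) : ℤ :=
  sInf { K : ℤ | ∃ l, ValidOrderOn adj bought A l ∧ budgetOf bought l ≤ K }

/-- The optimal budget of the whole bipartite graph. -/
noncomputable def bg (adj : V → V → Prop) (bought : V → Prop)
    [Fintype V] [DecidablePred bought] : ℤ :=
  bgOn adj bought Finset.univ

/-- `N*(I)`: the sold vertices all of whose bought neighbours lie in `I`. -/
def nstar (adj : V → V → Prop) [DecidableRel adj] (bought : V → Prop)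
    [DecidablePred bought] [Fintype V] [DecidableEq V] (I : Finset V) : Finset V :=
  Finset.univ.filter fun s => ¬ bought s ∧ ∀ b, bought b → adj b s → b ∈ I


namespace PathBudgetAux

lemma foldr_max_nonneg (L : List ℤ) : 0 ≤ L.foldr max 0 := by
  induction L with
  | nil => simp
  | cons a t ih => exact le_trans ih (le_max_right _ _)

lemma foldr_max_le {c : ℤ} (hc : 0 ≤ c) (L : List ℤ) (h : ∀ x ∈ L, x ≤ c) :
    L.foldr max 0 ≤ c := by
  induction L with
  | nil => simpa
  | cons a t ih =>
    simp only [List.foldr_cons]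
    exact max_le (h a (by simp)) (ih fun x hx => h x (by simp [hx]))

def pf (N e j : ℕ) : ℕ :=
  if j % 2 = e ∧ j + 1 < N then j + 1 else if j % 2 = e then j else j - 1

lemma pf_lt {N e j : ℕ} (hj : j < N) : pf N e j < N := by
  unfold pf; split_ifs <;> omega

lemma pf_invol {N e j : ℕ} (he : e < 2) (hj : j < N) : pf N e (pf N e j) = j := by
  simp only [pf]; split_ifs <;> omega

lemma pf_mod {N e j : ℕ} (he : e < 2) (hj : j < N) :
    (pf N e j % 2 ≠ e) ↔ ((j % 2 = e ∧ j + 1 < N) ∨ (j = 0 ∧ e = 1)) := by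
  simp only [pf]; split_ifs <;> omega

lemma pf_sold_gt {N e i β : ℕ} (he : e < 2) (hi : i < N) (hβ : β < N)
    (hie : i % 2 = e) (hnb : β + 1 = i ∨ i + 1 = β) :
    pf N e β < pf N e i := by
  simp only [pf]; split_ifs <;> omega

lemma countP_or_le {α : Type*} (p q : α → Bool) (l : List α) :
    l.countP (fun a => p a || q a) ≤ l.countP p + l.countP q := by
  induction l with
  | nil => simp
  | cons a t ih =>
    simp only [List.countP_cons]
    cases hp : p a <;> cases hq : q a <;> simp [hp, hq] <;> omega

lemma countP_parity (e m : ℕ) (he : e < 2) :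
    (List.range m).countP (fun j => decide (j % 2 = e)) = (m + 1 - e) / 2 := by
  induction m with
  | zero => simp; omega
  | succ m ih =>
    rw [List.range_succ, List.countP_append, ih]
    by_cases h : m % 2 = e <;> simp [h] <;> omega

lemma countP_eqzero (m : ℕ) :
    (List.range m).countP (fun j => decide (j = 0)) ≤ 1 := by
  have : ∀ k, (List.range k).countP (fun j => decide (j = 0)) = if k = 0 then 0 else 1 := by
    intro k
    induction k with
    | zero => simp
    | succ k ih =>
      rw [List.range_succ, List.countP_append, ih]
      by_cases h : k = 0 <;> simp [h]
  rw [this]; split <;> omega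

lemma count_bound {N e m : ℕ} (he : e < 2) (cond : ℕ → Bool)
    (h : ∀ j < m, cond j = true → (j % 2 = e ∧ j + 1 < N) ∨ (j = 0 ∧ e = 1)) :
    2 * (List.range m).countP cond ≤ m + 2 := by
  interval_cases e
  · have h1 : (List.range m).countP cond ≤
        (List.range m).countP (fun j => decide (j % 2 = 0)) := by
      apply List.countP_mono_left
      intro x hx hc
      simp only [List.mem_range] at hx
      rcases h x hx hc with ⟨h', _⟩ | ⟨_, h'⟩ <;> simp [h'] <;> omega
    have h2 := countP_parity 0 m (by norm_num)
    omega
  · have h1 : (List.range m).countP cond ≤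
        (List.range m).countP (fun j => decide (j % 2 = 1) || decide (j = 0)) := by
      apply List.countP_mono_left
      intro x hx hc
      simp only [List.mem_range] at hx
      rcases h x hx hc with ⟨h', _⟩ | ⟨h', _⟩ <;> simp [h']
    have h2 := countP_or_le (fun j => decide (j % 2 = 1)) (fun j => decide (j = 0))
      (List.range m)
    have h3 := countP_parity 1 m (by norm_num)
    have h4 := countP_eqzero m
    omega

end PathBudgetAux

open PathBudgetAux in
/-- if the underlying graph is a simple path (bipartitioned by `bought`,
every bought vertex having a sold neighbour) then `bg(H) ≤ 2`. -/

theorem path_budget {V : Type*} [Fintype V] [DecidableEq V]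
    (G : SimpleGraph V) (bought : V → Prop) [DecidablePred bought]
    (hbip : ∀ v w, G.Adj v w → (bought v ↔ ¬ bought w))
    (hpath : ∃ (n : ℕ) (f : V ≃ Fin n), ∀ v w,
      G.Adj v w ↔ ((f v : ℕ) + 1 = (f w : ℕ) ∨ (f w : ℕ) + 1 = (f v : ℕ)))
    (hBnbr : ∀ b, bought b → ∃ s, ¬ bought s ∧ G.Adj b s) :
    bg G.Adj bought ≤ 2 := by
  classical
  obtain ⟨N, f, hadj⟩ := hpath
  rcases Nat.eq_zero_or_pos N with hn | hN
  · -- empty graph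
    subst hn
    haveI : IsEmpty V := f.isEmpty
    have hvalid : ValidOrderOn G.Adj bought Finset.univ ([] : List V) := by
      refine ⟨List.nodup_nil, fun v => (IsEmpty.false v).elim, ?_⟩
      intro p hp s hs
      rw [List.prefix_nil] at hp
      subst hp
      simp at hs
    have hbud : budgetOf bought ([] : List V) ≤ 2 := by
      unfold budgetOf
      apply foldr_max_le (by norm_num)
      intro x hx
      simp only [List.mem_map] at hx
      obtain ⟨p, hp, rfl⟩ := hx
      rw [List.mem_inits, List.prefix_nil] at hp
      subst hp
      simp [prefixVal]
    refine csInf_le ⟨0, ?_⟩ ⟨[], hvalid, hbud⟩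
    rintro K ⟨l, _, hK⟩
    exact le_trans (foldr_max_nonneg _) hK
  · set u : ℕ → V := fun i => f.symm ⟨i % N, Nat.mod_lt _ hN⟩ with hu_def
    have hfu : ∀ i, i < N → ((f (u i) : ℕ)) = i := by
      intro i hi
      simp [hu_def, Nat.mod_eq_of_lt hi]
    have hu_surj : ∀ v, u ((f v : ℕ)) = v := by
      intro v
      have h1 : ((f v : ℕ)) % N = (f v : ℕ) := Nat.mod_eq_of_lt (f v).isLt
      simp only [hu_def, h1, Fin.eta, Equiv.symm_apply_apply]
    have hu_inj : ∀ i j, i < N → j < N → u i = u j → i = j := by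
      intro i j hi hj h
      have := congrArg (fun v => (f v : ℕ)) h
      simpa [hfu i hi, hfu j hj] using this
    have hadj_u : ∀ i, i + 1 < N → G.Adj (u i) (u (i + 1)) := by
      intro i hi
      rw [hadj]
      left
      rw [hfu i (by omega), hfu (i + 1) hi]
    set e : ℕ := if bought (u 0) then 1 else 0 with he_def
    have he : e < 2 := by rw [he_def]; split <;> omega
    have parity : ∀ i, i < N → (bought (u i) ↔ i % 2 ≠ e) := by
      intro i
      induction i with
      | zero =>
        intro _
        by_cases hb : bought (u 0) <;> simp [he_def, hb]
      | succ i ih =>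
        intro hi
        have h1 := ih (by omega)
        have h2 := hbip _ _ (hadj_u i hi)
        have h4 : bought (u (i + 1)) ↔ ¬ bought (u i) := by tauto
        rw [h4, h1]
        omega
    set L : List V := (List.range N).map (fun j => u (pf N e j)) with hL_def
    have hvalid : ValidOrderOn G.Adj bought Finset.univ L := by
      refine ⟨?_, ?_, ?_⟩
      · apply List.Nodup.map_on _ List.nodup_range
        intro x hx y hy hxy
        simp only [List.mem_range] at hx hy
        have h1 := hu_inj _ _ (pf_lt hx) (pf_lt hy) hxy
        have h2 := congrArg (pf N e) h1
        rwa [pf_invol he hx, pf_invol he hy] at h2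
      · intro v
        simp only [Finset.mem_univ, iff_true, hL_def, List.mem_map, List.mem_range]
        refine ⟨pf N e (f v : ℕ), pf_lt (f v).isLt, ?_⟩
        rw [pf_invol he (f v).isLt, hu_surj]
      · intro p hp s hs hsold b _ hb hadjbs
        rw [List.prefix_iff_eq_take] at hp
        set m := min p.length N with hm
        have hpm : p = (List.range m).map (fun j => u (pf N e j)) := by
          rw [hp, hL_def, ← List.map_take, List.take_range]
        have hmN : m ≤ N := min_le_right _ _
        rw [hpm] at hs
        simp only [List.mem_map, List.mem_range] at hs
        obtain ⟨j, hj, rfl⟩ := hs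
        set i := pf N e j with hi_def
        have hiN : i < N := pf_lt (by omega)
        have hji : pf N e i = j := pf_invol he (by omega)
        have hie : i % 2 = e := by
          by_contra hcon
          exact hsold ((parity i hiN).mpr hcon)
        rw [hadj, hfu i hiN] at hadjbs
        set β := (f b : ℕ) with hβ_def
        have hβN : β < N := (f b).isLt
        have hlt : pf N e β < pf N e i := pf_sold_gt he hiN hβN hie (by omega)
        rw [hpm]
        simp only [List.mem_map, List.mem_range]
        refine ⟨pf N e β, by omega, ?_⟩
        rw [pf_invol he hβN, hβ_def, hu_surj]
    have hbud : budgetOf bought L ≤ 2 := by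
      unfold budgetOf
      apply foldr_max_le (by norm_num)
      intro x hx
      simp only [List.mem_map] at hx
      obtain ⟨p, hp, rfl⟩ := hx
      rw [List.mem_inits, List.prefix_iff_eq_take] at hp
      set m := min p.length N with hm
      have hpm : p = (List.range m).map (fun j => u (pf N e j)) := by
        rw [hp, hL_def, ← List.map_take, List.take_range]
      have hmN : m ≤ N := min_le_right _ _
      rw [hpm]
      unfold prefixVal
      rw [List.countP_map, List.countP_map]
      simp only [Function.comp_def]
      have hlen : (List.range m).length = _ := List.length_eq_countP_add_countP
        (fun j => decide (bought (u (pf N e j))))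
      simp only [decide_eq_true_eq, List.length_range] at hlen
      have hcnt : 2 * (List.range m).countP (fun j => decide (bought (u (pf N e j)))) ≤ m + 2 := by
        apply count_bound he
        intro j hj hc
        rw [decide_eq_true_eq] at hc
        have hjN : j < N := lt_of_lt_of_le hj hmN
        have := (parity (pf N e j) (pf_lt hjN)).mp hc
        exact (pf_mod he hjN).mp this
      omega
    refine csInf_le ⟨0, ?_⟩ ⟨L, hvalid, hbud⟩
    rintro K ⟨l, _, hK⟩
    exact le_trans (foldr_max_nonneg _) hK
end

section
/- If H=(B,S,E) is a simple even cycle, with weights -1 on B and +1 on S, then bg(H) = 2. -/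
open Finset

variable {V : Type*}

namespace CycleAux

lemma foldr_max_le {l : List ℤ} {K : ℤ} (h0 : 0 ≤ K) (h : ∀ x ∈ l, x ≤ K) :
    l.foldr max 0 ≤ K := by
  induction l with
  | nil => simpa using h0
  | cons a t ih =>
    simp only [List.foldr_cons]
    exact max_le (h a (by simp)) (ih fun x hx => h x (by simp [hx]))

lemma le_foldr_max {l : List ℤ} {x : ℤ} (h : x ∈ l) : x ≤ l.foldr max 0 := by
  induction l with
  | nil => simp at h
  | cons a t ih =>
    simp only [List.foldr_cons]
    rcases List.mem_cons.1 h with rfl | h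
    · exact le_max_left _ _
    · exact (ih h).trans (le_max_right _ _)

lemma two_le_length {α : Type*} {l : List α} {a b : α} (ha : a ∈ l) (hb : b ∈ l)
    (hab : a ≠ b) : 2 ≤ l.length := by
  match l with
  | [] => simp at ha
  | [x] =>
    simp at ha hb; exact absurd (ha.trans hb.symm) hab
  | x :: y :: t => simp

lemma prefix_concat_iff {α : Type*} {r l : List α} {a : α} :
    r <+: l ++ [a] ↔ r <+: l ∨ r = l ++ [a] := by
  constructor
  · intro h
    rcases Nat.lt_or_ge r.length (l ++ [a]).length with hlen | hlen
    · left
      refine List.prefix_of_prefix_length_le h (List.prefix_append l [a]) ?_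
      simp only [List.length_append, List.length_singleton] at hlen
      omega
    · right
      exact h.eq_of_length (le_antisymm h.length_le hlen)
  · rintro (h | rfl)
    · exact h.trans (List.prefix_append l [a])
    · exact List.prefix_rfl

lemma not_pred_head_dropWhile {α : Type*} {p : α → Bool} :
    ∀ {l : List α} {a : α} {t : List α}, l.dropWhile p = a :: t → p a = false := by
  intro l
  induction l with
  | nil => intro a t h; simp at h
  | cons x xs ih =>
    intro a t h
    by_cases hp : p x
    · rw [List.dropWhile_cons_of_pos hp] at h; exact ih h
    · rw [List.dropWhile_cons_of_neg hp] at h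
      cases h; simpa using hp

def blkN : ℕ → List ℕ
  | 0 => []
  | k+1 => blkN k ++ [2*k+2, 2*k+1]

lemma perm_blkN (k : ℕ) : (0 :: blkN k).Perm (List.range (2*k+1)) := by
  induction k with
  | zero => simp [blkN, List.range_succ]
  | succ k ih =>
    have h1 : (0 :: blkN (k+1)) = (0 :: blkN k) ++ [2*k+2, 2*k+1] := by
      simp [blkN]
    rw [h1]
    have h2 : List.range (2*(k+1)+1) = List.range (2*k+1) ++ [2*k+1, 2*k+2] := by
      have e1 : 2*(k+1)+1 = (2*k+2)+1 := by omega
      have e2 : 2*k+2 = (2*k+1)+1 := by omega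
      rw [e1, List.range_succ, e2, List.range_succ]
      simp
    rw [h2]
    exact (ih.append_right _).trans (List.Perm.append_left _ (List.Perm.swap _ _ _))

lemma mem_blkN {x k : ℕ} : x ∈ blkN k ↔ 1 ≤ x ∧ x ≤ 2*k := by
  induction k with
  | zero => simp [blkN]; omega
  | succ k ih => simp [blkN, ih]; omega

lemma cE_blkN (k : ℕ) : (blkN k).countP (fun x => decide (x % 2 = 0)) = k := by
  induction k with
  | zero => simp [blkN]
  | succ k ih =>
    have h1 : (2*k+2) % 2 = 0 := by omega
    have h2 : (2*k+1) % 2 = 1 := by omega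
    simp [blkN, List.countP_append, List.countP_cons, ih, h1, h2]

lemma cO_blkN (k : ℕ) : (blkN k).countP (fun x => decide (x % 2 = 1)) = k := by
  induction k with
  | zero => simp [blkN]
  | succ k ih =>
    have h1 : (2*k+2) % 2 = 0 := by omega
    have h2 : (2*k+1) % 2 = 1 := by omega
    simp [blkN, List.countP_append, List.countP_cons, ih, h1, h2]

lemma blk_prefix {k : ℕ} {r : List ℕ} (hr : r <+: blkN k) :
    (∀ j, 2*j+1 ∈ r → 2*j+2 ∈ r ∧ (1 ≤ j → 2*j ∈ r)) ∧
    r.countP (fun x => decide (x % 2 = 0)) ≤ r.countP (fun x => decide (x % 2 = 1)) + 1 := by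
  induction k generalizing r with
  | zero =>
    simp [blkN] at hr
    subst hr; simp
  | succ k ih =>
    have hsplit : blkN (k+1) = (blkN k ++ [2*k+2]) ++ [2*k+1] := by simp [blkN]
    rw [hsplit] at hr
    rcases prefix_concat_iff.1 hr with hr' | rfl
    · rcases prefix_concat_iff.1 hr' with hr'' | rfl
      · exact ih hr''
      · constructor
        · intro j hj
          have hj' : 2*j+1 ∈ blkN k := by
            rcases List.mem_append.1 hj with h | h
            · exact h
            · simp at h; omega
          have hjb := mem_blkN.1 hj'
          constructor
          · have : 2*j+2 ∈ blkN k := mem_blkN.2 (by omega)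
            exact List.mem_append.2 (Or.inl this)
          · intro h1
            have : 2*j ∈ blkN k := mem_blkN.2 (by omega)
            exact List.mem_append.2 (Or.inl this)
        · have h1 : (2*k+2) % 2 = 0 := by omega
          simp [List.countP_append, List.countP_cons, cE_blkN, cO_blkN, h1]
    · constructor
      · intro j hj
        have hj' : 2*j+1 ∈ blkN (k+1) := by rw [hsplit]; exact hj
        have hjb := mem_blkN.1 hj'
        rw [← hsplit]
        constructor
        · exact mem_blkN.2 (by omega)
        · intro h1; exact mem_blkN.2 (by omega)
      · rw [← hsplit]
        simp [cE_blkN, cO_blkN]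

lemma perm_ilist {n : ℕ} (hn : 1 ≤ n) :
    (0 :: blkN (n-1) ++ [2*n-1]).Perm (List.range (2*n)) := by
  have h1 : (0 :: blkN (n-1) ++ [2*n-1]) = (0 :: blkN (n-1)) ++ [2*n-1] := by simp
  have h2 : 2*(n-1)+1 = 2*n-1 := by omega
  have h3 : List.range (2*n) = List.range (2*n-1) ++ [2*n-1] := by
    have : 2*n = (2*n-1)+1 := by omega
    rw [this, List.range_succ]
    simp
  rw [h1, h3]
  have := (perm_blkN (n-1)).append_right [2*n-1]
  rwa [h2] at this

lemma prefix_ilist {n : ℕ} (hn : 2 ≤ n) {q : List ℕ}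
    (hq : q <+: 0 :: blkN (n-1) ++ [2*n-1]) :
    (∀ i ∈ q, i % 2 = 1 →
      ((i < 2*n-1 → i-1 ∈ q ∧ i+1 ∈ q) ∧ (i = 2*n-1 → 0 ∈ q ∧ 2*n-2 ∈ q))) ∧
    (q.countP (fun x => decide (x % 2 = 0)) : ℤ)
      ≤ (q.countP (fun x => decide (x % 2 = 1)) : ℤ) + 2 := by
  match q with
  | [] => simp
  | a :: r =>
    rw [show (0 :: blkN (n-1) ++ [2*n-1]) = 0 :: (blkN (n-1) ++ [2*n-1]) from rfl,
      List.cons_prefix_cons] at hq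
    obtain ⟨rfl, hr⟩ := hq
    rcases prefix_concat_iff.1 hr with hr' | rfl
    · obtain ⟨H2, H3⟩ := blk_prefix hr'
      have hmem : ∀ x ∈ r, 1 ≤ x ∧ x ≤ 2*(n-1) := fun x hx =>
        mem_blkN.1 (hr'.sublist.mem hx)
      constructor
      · intro i hi hodd
        have hir : i ∈ r := by
          rcases List.mem_cons.1 hi with rfl | h
          · omega
          · exact h
        have hib := hmem i hir
        have hj : i = 2*(i/2)+1 := by omega
        obtain ⟨ha1, ha2⟩ := H2 (i/2) (by rw [← hj]; exact hir)
        constructor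
        · intro _
          constructor
          · rcases Nat.eq_zero_or_pos (i/2) with h0 | h0
            · have : i - 1 = 0 := by omega
              rw [this]; exact List.mem_cons_self
            · have := ha2 h0
              have : i - 1 ∈ r := by rwa [show i - 1 = 2*(i/2) from by omega]
              exact List.mem_cons_of_mem _ this
          · have : i + 1 ∈ r := by rwa [show i + 1 = 2*(i/2)+2 from by omega]
            exact List.mem_cons_of_mem _ this
        · intro hlast; omega
      · have h0 : (0:ℕ) % 2 = 0 := by omega
        simp only [List.countP_cons, h0, decide_true, decide_false]
        push_cast
        omega
    · constructor
      · intro i hi hodd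
        have hir : i ∈ blkN (n-1) ∨ i = 2*n-1 := by
          rcases List.mem_cons.1 hi with rfl | h
          · omega
          · rcases List.mem_append.1 h with h | h
            · exact Or.inl h
            · simp at h; exact Or.inr h
        rcases hir with hir | rfl
        · have hib := mem_blkN.1 hir
          obtain ⟨H2, _⟩ := blk_prefix (List.prefix_refl (blkN (n-1)))
          have hj : i = 2*(i/2)+1 := by omega
          obtain ⟨ha1, ha2⟩ := H2 (i/2) (by rw [← hj]; exact hir)
          constructor
          · intro _
            constructor
            · rcases Nat.eq_zero_or_pos (i/2) with h0 | h0
              · have : i - 1 = 0 := by omega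
                rw [this]; exact List.mem_cons_self
              · have h2j := ha2 h0
                have : i - 1 ∈ blkN (n-1) := by
                  rwa [show i - 1 = 2*(i/2) from by omega]
                exact List.mem_cons_of_mem _ (List.mem_append.2 (Or.inl this))
            · have : i + 1 ∈ blkN (n-1) := by
                rwa [show i + 1 = 2*(i/2)+2 from by omega]
              exact List.mem_cons_of_mem _ (List.mem_append.2 (Or.inl this))
          · intro hlast; omega
        · constructor
          · intro hlt; omega
          · intro _
            refine ⟨List.mem_cons_self, ?_⟩
            have : 2*n-2 ∈ blkN (n-1) := mem_blkN.2 (by omega)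
            exact List.mem_cons_of_mem _ (List.mem_append.2 (Or.inl this))
      · have h0 : (0:ℕ) % 2 = 0 := by omega
        have hlast : (2*n-1) % 2 = 1 := by omega
        simp only [List.countP_cons, List.countP_append, h0, hlast, cE_blkN, cO_blkN,
          decide_true, decide_false, List.countP_nil]
        push_cast
        omega

lemma budgetOf_le_of {V : Type*} {bought : V → Prop} [DecidablePred bought]
    {l : List V} {K : ℤ} (h0 : 0 ≤ K)
    (h : ∀ p, p <+: l → prefixVal bought p ≤ K) : budgetOf bought l ≤ K := by
  apply foldr_max_le h0
  intro x hx
  obtain ⟨p, hp, rfl⟩ := List.mem_map.1 hx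
  exact h p ((List.mem_inits _ _).1 hp)

lemma prefixVal_le_budgetOf {V : Type*} {bought : V → Prop} [DecidablePred bought]
    {p l : List V} (hp : p <+: l) : prefixVal bought p ≤ budgetOf bought l :=
  le_foldr_max (List.mem_map.2 ⟨p, (List.mem_inits _ _).2 hp, rfl⟩)

end CycleAux

/-- if the underlying graph is a simple even cycle on at least 4 vertices,
alternating between bought and sold vertices, then `bg(H) = 2`. -/
theorem cycle_budget {V : Type*} [Fintype V] [DecidableEq V]
    (G : SimpleGraph V) (bought : V → Prop) [DecidablePred bought]
    (hcycle : ∃ (n : ℕ) (f : V ≃ Fin (2 * n)), 2 ≤ n ∧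
      (∀ v w, G.Adj v w ↔
        (((f v : ℕ) + 1) % (2 * n) = (f w : ℕ) ∨ ((f w : ℕ) + 1) % (2 * n) = (f v : ℕ))) ∧
      (∀ v, bought v ↔ (f v : ℕ) % 2 = 0)) :
    bg G.Adj bought = 2 := by
  classical
  obtain ⟨n, f, hn, hadj, hb⟩ := hcycle
  open CycleAux in
  have hN : 0 < 2*n := by omega
  set g : ℕ → V := fun i => f.symm ⟨i % (2*n), Nat.mod_lt i hN⟩ with hgdef
  have hg : ∀ i, (f (g i) : ℕ) = i % (2*n) := by
    intro i; simp [hgdef]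
  have hglt : ∀ i, i < 2*n → (f (g i) : ℕ) = i := by
    intro i hi; rw [hg, Nat.mod_eq_of_lt hi]
  have hbg : ∀ i, i < 2*n → (bought (g i) ↔ i % 2 = 0) := by
    intro i hi; rw [hb, hglt i hi]
  have hginj : ∀ i, i < 2*n → ∀ j, j < 2*n → g i = g j → i = j := by
    intro i hi j hj hgij
    have := congrArg (fun v => (f v : ℕ)) hgij
    simpa [hglt i hi, hglt j hj] using this
  have hfvlt : ∀ v : V, (f v : ℕ) < 2*n := fun v => (f v).isLt
  have hgv : ∀ v : V, g ((f v : ℕ)) = v := by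
    intro v
    have h1 : (⟨(f v : ℕ) % (2*n), Nat.mod_lt _ hN⟩ : Fin (2*n)) = f v :=
      Fin.ext (by simp [Nat.mod_eq_of_lt (hfvlt v)])
    rw [hgdef]
    simp only [h1, Equiv.symm_apply_apply]
  set I : List ℕ := 0 :: CycleAux.blkN (n-1) ++ [2*n-1] with hIdef
  have hperm : I.Perm (List.range (2*n)) := by
    rw [hIdef]; exact CycleAux.perm_ilist (by omega)
  have hmemI : ∀ x, x ∈ I ↔ x < 2*n := by
    intro x; rw [hperm.mem_iff, List.mem_range]
  have hnodupI : I.Nodup := hperm.nodup_iff.2 List.nodup_range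
  set L : List V := I.map g with hLdef
  have hLnodup : L.Nodup := by
    rw [hLdef]
    refine List.Nodup.map_on ?_ hnodupI
    intro x hx y hy hxy
    exact hginj x ((hmemI x).1 hx) y ((hmemI y).1 hy) hxy
  have hLmem : ∀ v, v ∈ L ↔ v ∈ (univ : Finset V) := by
    intro v
    simp only [Finset.mem_univ, iff_true, hLdef, List.mem_map]
    exact ⟨(f v : ℕ), (hmemI _).2 (hfvlt v), hgv v⟩
  have hLpre : ∀ p, p <+: L → ∃ q, q <+: I ∧ p = q.map g := by
    intro p hp
    refine ⟨I.take p.length, List.take_prefix _ _, ?_⟩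
    have h1 := List.prefix_iff_eq_take.1 hp
    rw [hLdef] at h1
    rw [List.map_take]
    exact h1
  have hval : ∀ q : List ℕ, (∀ x ∈ q, x < 2*n) →
      prefixVal bought (q.map g) =
        (q.countP (fun x => decide (x % 2 = 0)) : ℤ) -
          (q.countP (fun x => decide (x % 2 = 1)) : ℤ) := by
    intro q hq
    have e1 : (q.map g).countP (fun v => decide (bought v)) =
        q.countP (fun x => decide (x % 2 = 0)) := by
      rw [List.countP_map]
      apply List.countP_congr
      intro x hx
      simp only [Function.comp_apply, decide_eq_true_eq]
      exact hbg x (hq x hx)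
    have e2 : (q.map g).countP (fun v => decide (¬ bought v)) =
        q.countP (fun x => decide (x % 2 = 1)) := by
      rw [List.countP_map]
      apply List.countP_congr
      intro x hx
      simp only [Function.comp_apply, decide_eq_true_eq]
      rw [hbg x (hq x hx)]
      omega
    unfold prefixVal
    rw [e1, e2]
  have hLbudget : budgetOf bought L ≤ 2 := by
    apply CycleAux.budgetOf_le_of (by norm_num)
    intro p hp
    obtain ⟨q, hqI, rfl⟩ := hLpre p hp
    have hqlt : ∀ x ∈ q, x < 2*n := fun x hx => (hmemI x).1 (hqI.sublist.mem hx)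
    rw [hval q hqlt]
    rw [hIdef] at hqI
    have := (CycleAux.prefix_ilist hn hqI).2
    omega
  have hLvalid : ValidOrderOn G.Adj bought univ L := by
    refine ⟨hLnodup, hLmem, ?_⟩
    intro p hp s hs hsold b _ hbbought hadjbs
    obtain ⟨q, hqI, rfl⟩ := hLpre p hp
    obtain ⟨x, hxq, rfl⟩ := List.mem_map.1 hs
    have hxlt : x < 2*n := (hmemI x).1 (hqI.sublist.mem hxq)
    have hxodd : x % 2 = 1 := by
      rcases Nat.mod_two_eq_zero_or_one x with h | h
      · exact absurd ((hbg x hxlt).2 h) hsold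
      · exact h
    have hjlt : (f b : ℕ) < 2*n := hfvlt b
    have hjev : (f b : ℕ) % 2 = 0 := (hb b).1 hbbought
    have hadj' := (hadj b (g x)).1 hadjbs
    rw [hglt x hxlt] at hadj'
    rw [hIdef] at hqI
    obtain ⟨H1, _⟩ := CycleAux.prefix_ilist hn hqI
    have Hx := H1 x hxq hxodd
    have hbmem : (f b : ℕ) ∈ q := by
      rcases hadj' with h | h
      · rcases (by omega : (f b:ℕ) + 1 < 2*n ∨ (f b:ℕ) + 1 = 2*n) with hj1 | hj1
        · rw [Nat.mod_eq_of_lt hj1] at h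
          by_cases hxl : x < 2*n - 1
          · have h2 := (Hx.1 hxl).1
            rwa [show (f b:ℕ) = x - 1 from by omega]
          · have hxe : x = 2*n-1 := by omega
            have h2 := (Hx.2 hxe).2
            rwa [show (f b:ℕ) = 2*n-2 from by omega]
        · exfalso; rw [hj1, Nat.mod_self] at h; omega
      · rcases (by omega : x + 1 < 2*n ∨ x + 1 = 2*n) with hx1 | hx1
        · rw [Nat.mod_eq_of_lt hx1] at h
          have hxl : x < 2*n - 1 := by omega
          have h2 := (Hx.1 hxl).2
          rwa [show (f b:ℕ) = x + 1 from by omega]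
        · rw [hx1, Nat.mod_self] at h
          have hxe : x = 2*n - 1 := by omega
          have h2 := (Hx.2 hxe).1
          rwa [show (f b:ℕ) = 0 from by omega]
    exact List.mem_map.2 ⟨(f b:ℕ), hbmem, hgv b⟩
  have hlower : ∀ l, ValidOrderOn G.Adj bought univ l → (2:ℤ) ≤ budgetOf bought l := by
    rintro l ⟨hnd, hmem, hpre⟩
    have h1lt : (1:ℕ) < 2*n := by omega
    have hs0 : ¬ bought (g 1) := by
      rw [hbg 1 h1lt]; omega
    have hs0mem : g 1 ∈ l := (hmem _).2 (Finset.mem_univ _)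
    set pd := l.takeWhile (fun v => decide (bought v)) with hpd
    set dp := l.dropWhile (fun v => decide (bought v)) with hdp
    have hsplit : pd ++ dp = l := List.takeWhile_append_dropWhile
    obtain ⟨s, rest, hdps⟩ : ∃ s rest, dp = s :: rest := by
      cases hdpc : dp with
      | nil =>
        exfalso
        rw [hdpc, List.append_nil] at hsplit
        apply hs0
        have h2 : g 1 ∈ pd := by rw [hsplit]; exact hs0mem
        rw [hpd] at h2
        have h3 := List.mem_takeWhile_imp h2
        simpa using h3
      | cons s rest => exact ⟨s, rest, rfl⟩
    have hsold : ¬ bought s := by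
      have h2 := CycleAux.not_pred_head_dropWhile (hdp.symm.trans hdps)
      simpa using h2
    have hppre : pd ++ [s] <+: l :=
      ⟨rest, by rw [List.append_assoc, List.singleton_append, ← hdps, hsplit]⟩
    have hilt : (f s : ℕ) < 2*n := hfvlt s
    have hiodd : (f s : ℕ) % 2 = 1 := by
      rcases Nat.mod_two_eq_zero_or_one ((f s : ℕ)) with h | h
      · exact absurd ((hb s).2 h) hsold
      · exact h
    have hb2lt : (f s : ℕ) - 1 < 2*n := by omega
    have hb2 : bought (g ((f s : ℕ) - 1)) := (hbg _ hb2lt).2 (by omega)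
    have hadj2 : G.Adj (g ((f s : ℕ) - 1)) s := by
      rw [hadj]
      left
      rw [hglt _ hb2lt, show (f s : ℕ) - 1 + 1 = (f s : ℕ) from by omega,
        Nat.mod_eq_of_lt hilt]
    have hb1lt : ((f s : ℕ)+1) % (2*n) < 2*n := Nat.mod_lt _ hN
    have hb1 : bought (g (((f s : ℕ)+1) % (2*n))) := by
      apply (hbg _ hb1lt).2
      rcases (by omega : (f s : ℕ) + 1 < 2*n ∨ (f s : ℕ) + 1 = 2*n) with h | h
      · rw [Nat.mod_eq_of_lt h]; omega
      · rw [h, Nat.mod_self]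
    have hadj1 : G.Adj (g (((f s : ℕ)+1) % (2*n))) s := by
      rw [hadj]
      right
      rw [hglt _ hb1lt]
    have hne : g (((f s : ℕ)+1) % (2*n)) ≠ g ((f s : ℕ) - 1) := by
      intro he
      have h2 := hginj _ hb1lt _ hb2lt he
      rcases (by omega : (f s : ℕ) + 1 < 2*n ∨ (f s : ℕ) + 1 = 2*n) with h | h
      · rw [Nat.mod_eq_of_lt h] at h2; omega
      · rw [h, Nat.mod_self] at h2; omega
    have hsmem : s ∈ pd ++ [s] := by simp
    have hin1 := hpre _ hppre s hsmem hsold _ (Finset.mem_univ _) hb1 hadj1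
    have hin2 := hpre _ hppre s hsmem hsold _ (Finset.mem_univ _) hb2 hadj2
    have hin1' : g (((f s : ℕ)+1) % (2*n)) ∈ pd := by
      rcases List.mem_append.1 hin1 with h | h
      · exact h
      · simp only [List.mem_singleton] at h
        rw [h] at hb1; exact absurd hb1 hsold
    have hin2' : g ((f s : ℕ) - 1) ∈ pd := by
      rcases List.mem_append.1 hin2 with h | h
      · exact h
      · simp only [List.mem_singleton] at h
        rw [h] at hb2; exact absurd hb2 hsold
    have hlen : 2 ≤ pd.length := CycleAux.two_le_length hin1' hin2' hne
    have hcount1 : pd.countP (fun v => decide (bought v)) = pd.length := by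
      apply List.countP_eq_length.2
      intro a ha
      rw [hpd] at ha
      exact List.mem_takeWhile_imp (p := fun v => decide (bought v)) ha
    have hcount2 : pd.countP (fun v => decide (¬ bought v)) = 0 := by
      apply List.countP_eq_zero.2
      intro a ha
      rw [hpd] at ha
      have h2 := List.mem_takeWhile_imp ha
      simp only [decide_eq_true_eq] at h2 ⊢
      simpa using h2
    have hpv : (2:ℤ) ≤ prefixVal bought pd := by
      unfold prefixVal
      rw [hcount1, hcount2]
      push_cast
      omega
    calc (2:ℤ) ≤ prefixVal bought pd := hpv
      _ ≤ budgetOf bought l := CycleAux.prefixVal_le_budgetOf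
        (by rw [hpd]; exact List.takeWhile_prefix _)
  have hT2 : (2:ℤ) ∈ {K : ℤ | ∃ l, ValidOrderOn G.Adj bought univ l ∧ budgetOf bought l ≤ K} :=
    ⟨L, hLvalid, hLbudget⟩
  have hTlb : ∀ K ∈ {K : ℤ | ∃ l, ValidOrderOn G.Adj bought univ l ∧ budgetOf bought l ≤ K},
      (2:ℤ) ≤ K := by
    rintro K ⟨l, hl, hbl⟩
    exact le_trans (hlower l hl) hbl
  show bgOn G.Adj bought univ = 2
  unfold bgOn
  exact le_antisymm (csInf_le ⟨2, fun K hK => hTlb K hK⟩ hT2) (le_csInf ⟨2, hT2⟩ hTlb)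
end
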